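/- arXiv:1408.6978 — 5 statements merged into one kernel-verified Lean document; each statement's English description precedes it below -/
import Mathlib

section
/- Let A be an n×n matrix over ZMod 2 that is symmetric, and let p be an index. Let A' be the (n+1)×(n+1) block matrix A' = fromBlocks 1 r c (A + E_{pp}), where r is the row vector equal to the standard basis vector e_p, c is the column vector equal to e_p, and E_{pp} is the matrix with a single 1 in entry (p,p). (A' is the mod-2 intersection matrix after blowing up at a point lying on exactly one exceptional curve E_p: the new exceptional curve is odd, meets only E_p, and the self-intersection parity of E_p flips.) Then det A' = det A. -/
/-- Blowing up at a point lying on exactly one exceptional curve `E_p` preserves the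
determinant of the mod-2 intersection matrix. The new matrix is the block matrix
`fromBlocks 1 r c (A + E_pp)` where `r` (resp. `c`) is the row (resp. column) vector
equal to the standard basis vector `e_p`, and `E_pp = stdBasisMatrix p p 1`. -/
theorem blowup_on_one_curve_det {n : ℕ} (A : Matrix (Fin n) (Fin n) (ZMod 2))
    (hA : A.IsSymm) (p : Fin n) :
    (Matrix.fromBlocks (1 : Matrix (Fin 1) (Fin 1) (ZMod 2))
      (Matrix.of fun _ j => (Pi.single p 1 : Fin n → ZMod 2) j)
      (Matrix.of fun i _ => (Pi.single p 1 : Fin n → ZMod 2) i)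
      (A + Matrix.single p p 1)).det = A.det := by
  rw [Matrix.det_fromBlocks_one₁₁]
  congr 1
  have : (Matrix.of fun i (_ : Fin 1) => (Pi.single p 1 : Fin n → ZMod 2) i) *
      (Matrix.of fun (_ : Fin 1) j => (Pi.single p 1 : Fin n → ZMod 2) j) =
      Matrix.single p p 1 := by
    ext i j
    simp [Matrix.mul_apply, Matrix.single, Pi.single_apply, eq_comm]
    aesop
  rw [this]
  abel
end

section
/- Let A be an n×n matrix over ZMod 2 that is symmetric, and let p be an index. Let A' be the (n+1)×(n+1) block matrix A' = fromBlocks 1 r c (A + E_{pp}), where r is the row vector equal to the standard basis vector e_p, c is the column vector equal to e_p, and E_{pp} is the matrix with a single 1 in entry (p,p). (A' is the mod-2 intersection matrix after blowing up at a point lying on exactly one exceptional curve E_p.) Then rank A' = rank A + 1; equivalently, the corank is preserved: (n+1) − rank A' = n − rank A. -/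
open Matrix LinearMap

variable {K : Type*} [Field K] {m p : Type*} [Fintype m] [Fintype p] [DecidableEq m] [DecidableEq p]

lemma mulVecLin_fromBlocks_diag (A : Matrix m m K) (D : Matrix p p K) :
    (Matrix.fromBlocks A 0 0 D).mulVecLin =
      (LinearEquiv.sumArrowLequivProdArrow m p K K).symm.toLinearMap ∘ₗ
        (A.mulVecLin.prodMap D.mulVecLin) ∘ₗ
        (LinearEquiv.sumArrowLequivProdArrow m p K K).toLinearMap := by
  ext x i
  cases i <;>
    simp [Matrix.mulVecLin, Matrix.mulVec, Matrix.fromBlocks, dotProduct,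
      Fintype.sum_sum_type, LinearEquiv.sumArrowLequivProdArrow, Sum.elim]

lemma range_prodMap' {M M' N N' : Type*} [AddCommGroup M] [AddCommGroup M'] [AddCommGroup N]
    [AddCommGroup N'] [Module K M] [Module K M'] [Module K N] [Module K N']
    (f : M →ₗ[K] N) (g : M' →ₗ[K] N') :
    LinearMap.range (f.prodMap g) = (LinearMap.range f).prod (LinearMap.range g) := by
  ext ⟨x, y⟩
  constructor
  · rintro ⟨⟨a, b⟩, h⟩
    obtain ⟨h1, h2⟩ := Prod.mk.injEq .. ▸ h
    exact ⟨⟨a, h1⟩, ⟨b, h2⟩⟩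
  · rintro ⟨⟨a, ha⟩, ⟨b, hb⟩⟩
    exact ⟨(a, b), by simp [ha, hb]⟩

/-- `p.prod q` is linearly equivalent to `p × q`. -/
def prodSubmoduleEquiv {M N : Type*} [AddCommGroup M] [AddCommGroup N] [Module K M] [Module K N]
    (q : Submodule K M) (r : Submodule K N) : (q.prod r) ≃ₗ[K] q × r where
  toFun x := (⟨x.1.1, x.2.1⟩, ⟨x.1.2, x.2.2⟩)
  invFun x := ⟨(x.1.1, x.2.1), x.1.2, x.2.2⟩
  left_inv _ := rfl
  right_inv _ := rfl
  map_add' _ _ := rfl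
  map_smul' _ _ := rfl

lemma rank_fromBlocks_diag (A : Matrix m m K) (D : Matrix p p K) :
    (Matrix.fromBlocks A 0 0 D).rank = A.rank + D.rank := by
  rw [Matrix.rank, mulVecLin_fromBlocks_diag, LinearMap.range_comp,
    LinearMap.range_comp_of_range_eq_top _ (LinearEquiv.range _), range_prodMap',
    LinearEquiv.finrank_map_eq, Matrix.rank, Matrix.rank]
  rw [(prodSubmoduleEquiv _ _).finrank_eq, Module.finrank_prod]



/-- Blowing up at a point lying on exactly one exceptional curve `E_p` increases the
rank of the mod-2 intersection matrix by exactly one, hence preserves the corank. -/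
theorem blowup_on_one_curve_rank {n : ℕ} (A : Matrix (Fin n) (Fin n) (ZMod 2))
    (hA : A.IsSymm) (p : Fin n) :
    (Matrix.fromBlocks (1 : Matrix (Fin 1) (Fin 1) (ZMod 2))
      (Matrix.of fun _ j => (Pi.single p 1 : Fin n → ZMod 2) j)
      (Matrix.of fun i _ => (Pi.single p 1 : Fin n → ZMod 2) i)
      (A + Matrix.single p p 1)).rank = A.rank + 1 := by

  set r : Matrix (Fin 1) (Fin n) (ZMod 2) :=
    Matrix.of fun _ j => (Pi.single p 1 : Fin n → ZMod 2) j with hr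
  set c : Matrix (Fin n) (Fin 1) (ZMod 2) :=
    Matrix.of fun i _ => (Pi.single p 1 : Fin n → ZMod 2) i with hc
  have hcr : c * r = Matrix.single p p 1 := by
    ext i j
    simp only [hr, hc, Matrix.mul_apply, Matrix.of_apply, Matrix.single,
      Pi.single_apply, Finset.sum_const, Finset.card_univ, Fintype.card_fin, one_smul]
    by_cases hi : p = i <;> by_cases hj : p = j <;> simp_all [eq_comm]
  have factor : Matrix.fromBlocks (1 : Matrix (Fin 1) (Fin 1) (ZMod 2)) r c
      (A + Matrix.single p p 1) =
      Matrix.fromBlocks 1 0 c 1 * Matrix.fromBlocks 1 0 0 A * Matrix.fromBlocks 1 r 0 1 := by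
    rw [Matrix.fromBlocks_multiply, Matrix.fromBlocks_multiply]
    congr 1 <;> simp [hcr, add_comm]
  have hdetL : IsUnit (Matrix.fromBlocks (1 : Matrix (Fin 1) (Fin 1) (ZMod 2)) 0 c 1).det := by
    rw [Matrix.det_fromBlocks_zero₁₂]; simp
  have hdetU : IsUnit (Matrix.fromBlocks (1 : Matrix (Fin 1) (Fin 1) (ZMod 2)) r 0 1).det := by
    rw [Matrix.det_fromBlocks_zero₂₁]; simp
  rw [factor, Matrix.rank_mul_eq_left_of_isUnit_det _ _ hdetU,
    Matrix.rank_mul_eq_right_of_isUnit_det _ _ hdetL, rank_fromBlocks_diag,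
    Matrix.rank_one, add_comm]
  simp
end

section
/- Let A be an n×n matrix over ZMod 2 that is symmetric, and let p ≠ q be two indices with A p q = 1. Let A' be the (n+1)×(n+1) block matrix A' = fromBlocks 1 r c (A + E_{pp} + E_{qq} + E_{pq} + E_{qp}), where r is the row vector e_p + e_q and c is the column vector e_p + e_q. (A' is the mod-2 intersection matrix after blowing up at the intersection point of the two curves E_p and E_q: the new exceptional curve is odd and meets E_p and E_q, the self-intersection parities of E_p and E_q flip, and E_p and E_q become disjoint.) Then det A' = det A. -/
/-- Blowing up at the intersection point of two exceptional curves `E_p` and `E_q`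
preserves the determinant of the mod-2 intersection matrix. -/
theorem blowup_on_two_curves_det {n : ℕ} (A : Matrix (Fin n) (Fin n) (ZMod 2))
    (hA : A.IsSymm) (p q : Fin n) (hpq : p ≠ q) (hApq : A p q = 1) :
    (Matrix.fromBlocks (1 : Matrix (Fin 1) (Fin 1) (ZMod 2))
      (Matrix.of fun _ j => (Pi.single p 1 : Fin n → ZMod 2) j + (Pi.single q 1 : Fin n → ZMod 2) j)
      (Matrix.of fun i _ => (Pi.single p 1 : Fin n → ZMod 2) i + (Pi.single q 1 : Fin n → ZMod 2) i)
      (A + Matrix.single p p 1 + Matrix.single q q 1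
         + Matrix.single p q 1 + Matrix.single q p 1)).det = A.det := by
  rw [Matrix.det_fromBlocks_one₁₁]
  have key : ((Matrix.of fun i (_ : Fin 1) =>
        (Pi.single p 1 : Fin n → ZMod 2) i + (Pi.single q 1 : Fin n → ZMod 2) i) *
      (Matrix.of fun (_ : Fin 1) j =>
        (Pi.single p 1 : Fin n → ZMod 2) j + (Pi.single q 1 : Fin n → ZMod 2) j)) =
      Matrix.single p p 1 + Matrix.single p q 1
        + Matrix.single q p 1 + Matrix.single q q 1 := by
    ext i j
    simp only [Matrix.mul_apply, Fin.sum_univ_one, Matrix.of_apply, Matrix.add_apply,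
      Matrix.single_eq_single_vecMulVec_single, Matrix.vecMulVec_apply]
    ring
  rw [key]
  congr 1
  abel
end

section
/- Contraction C3 preserves the intersection data: let A be an m×m symmetric matrix over ZMod 2 (with m ≥ 4) and let u, v, p, r be four pairwise distinct indices such that A u u = 0, A v v = 0, A u v = 1, A u p = 1, A u k = 0 for every k not in {u,v,p}, A v r = 1, and A v k = 0 for every k not in {u,v,r} (i.e., u and v are adjacent even vertices, each of valency 2, attached respectively to p and to r). Let B be the (m−2)×(m−2) matrix obtained from A by deleting the rows and columns indexed by u and v and adding 1 to the entries (p,r) and (r,p). Then det B = det A and rank A = rank B + 2 (so the corank is preserved). -/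
open Matrix

theorem my_range_prodMap {R M N M' N' : Type*} [CommRing R]
    [AddCommGroup M] [AddCommGroup N] [AddCommGroup M'] [AddCommGroup N']
    [Module R M] [Module R N] [Module R M'] [Module R N']
    (f : M →ₗ[R] M') (g : N →ₗ[R] N') :
    LinearMap.range (f.prodMap g) = (LinearMap.range f).prod (LinearMap.range g) := by
  ext ⟨a, b⟩
  simp only [LinearMap.mem_range, Submodule.mem_prod]
  constructor
  · rintro ⟨⟨x, y⟩, h⟩
    exact ⟨⟨x, (Prod.ext_iff.mp h).1⟩, ⟨y, (Prod.ext_iff.mp h).2⟩⟩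
  · rintro ⟨⟨x, hx⟩, ⟨y, hy⟩⟩
    exact ⟨(x, y), Prod.ext hx hy⟩

noncomputable def mySubProdEquiv {R M N : Type*} [CommRing R]
    [AddCommGroup M] [AddCommGroup N] [Module R M] [Module R N]
    (p : Submodule R M) (q : Submodule R N) :
    (p.prod q) ≃ₗ[R] p × q where
  toFun x := (⟨x.1.1, x.2.1⟩, ⟨x.1.2, x.2.2⟩)
  invFun y := ⟨(y.1.1, y.2.1), ⟨y.1.2, y.2.2⟩⟩
  map_add' x y := rfl
  map_smul' c x := rfl
  left_inv x := rfl
  right_inv y := rfl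

theorem my_finrank_prod {K M N : Type*} [Field K]
    [AddCommGroup M] [AddCommGroup N] [Module K M] [Module K N]
    [FiniteDimensional K M] [FiniteDimensional K N]
    (p : Submodule K M) (q : Submodule K N) :
    Module.finrank K (p.prod q) = Module.finrank K p + Module.finrank K q := by
  rw [(mySubProdEquiv p q).finrank_eq, Module.finrank_prod]

theorem my_mulVecLin_fromBlocks_diag {K : Type*} [Field K] {m n : Type*}
    [Fintype m] [Fintype n] (A : Matrix m m K) (D : Matrix n n K) :
    (Matrix.fromBlocks A 0 0 D).mulVecLin =
      ((LinearEquiv.sumArrowLequivProdArrow m n K K).symm.toLinearMap.comp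
        ((A.mulVecLin.prodMap D.mulVecLin).comp
          (LinearEquiv.sumArrowLequivProdArrow m n K K).toLinearMap)) := by
  ext x i
  cases i with
  | inl i =>
      simp [Matrix.mulVecLin, Matrix.fromBlocks_mulVec, LinearEquiv.sumArrowLequivProdArrow,
        Matrix.mulVec, dotProduct]
  | inr i =>
      simp [Matrix.mulVecLin, Matrix.fromBlocks_mulVec, LinearEquiv.sumArrowLequivProdArrow,
        Matrix.mulVec, dotProduct]

theorem my_rank_fromBlocks_diag {K : Type*} [Field K] {m n : Type*}
    [Fintype m] [Fintype n] (A : Matrix m m K) (D : Matrix n n K) :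
    (Matrix.fromBlocks A 0 0 D).rank = A.rank + D.rank := by
  rw [Matrix.rank, my_mulVecLin_fromBlocks_diag, LinearMap.range_comp, LinearMap.range_comp,
    LinearEquiv.range, Submodule.map_top, LinearEquiv.finrank_map_eq, my_range_prodMap,
    my_finrank_prod]
  rfl

theorem my_rank_fromBlocks₁₁ {K : Type*} [Field K] {m n : Type*}
    [Fintype m] [Fintype n] [DecidableEq m] [DecidableEq n]
    (A : Matrix m m K) (B : Matrix m n K) (C : Matrix n m K) (D : Matrix n n K)
    [Invertible A] :
    (Matrix.fromBlocks A B C D).rank = Fintype.card m + (D - C * ⅟A * B).rank := by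
  rw [Matrix.fromBlocks_eq_of_invertible₁₁ A B C D]
  rw [Matrix.rank_mul_eq_left_of_isUnit_det _ _ (by
    rw [Matrix.det_fromBlocks_zero₂₁, Matrix.det_one, Matrix.det_one, one_mul]
    exact isUnit_one)]
  rw [Matrix.rank_mul_eq_right_of_isUnit_det _ _ (by
    rw [Matrix.det_fromBlocks_zero₁₂, Matrix.det_one, Matrix.det_one, one_mul]
    exact isUnit_one)]
  rw [my_rank_fromBlocks_diag, Matrix.rank_of_isUnit A (isUnit_of_invertible A)]


/-- Contraction C3: removing two adjacent even vertices `u` and `v`, each of valency 2,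
attached respectively to `p` and to `r` (delete the rows and columns of `u` and `v` and
join `p` and `r` by an edge) preserves the determinant and drops the rank of the mod-2
intersection matrix by exactly two (so the corank is preserved). -/
theorem contraction_C3 {m : ℕ} (hm : 4 ≤ m) (A : Matrix (Fin m) (Fin m) (ZMod 2))
    (hA : A.IsSymm) (u v p r : Fin m)
    (huv : u ≠ v) (hup : u ≠ p) (hur : u ≠ r) (hvp : v ≠ p) (hvr : v ≠ r) (hpr : p ≠ r)
    (huu : A u u = 0) (hvv : A v v = 0) (hAuv : A u v = 1)
    (hAup : A u p = 1) (huval : ∀ k, k ≠ u → k ≠ v → k ≠ p → A u k = 0)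
    (hAvr : A v r = 1) (hvval : ∀ k, k ≠ u → k ≠ v → k ≠ r → A v k = 0) :
    (A.submatrix (Subtype.val : {k : Fin m // k ≠ u ∧ k ≠ v} → Fin m) Subtype.val
        + Matrix.single (⟨p, hup.symm, hvp.symm⟩ : {k : Fin m // k ≠ u ∧ k ≠ v})
            (⟨r, hur.symm, hvr.symm⟩ : {k : Fin m // k ≠ u ∧ k ≠ v}) 1
        + Matrix.single (⟨r, hur.symm, hvr.symm⟩ : {k : Fin m // k ≠ u ∧ k ≠ v})
            (⟨p, hup.symm, hvp.symm⟩ : {k : Fin m // k ≠ u ∧ k ≠ v}) 1).det = A.det ∧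
      A.rank = (A.submatrix (Subtype.val : {k : Fin m // k ≠ u ∧ k ≠ v} → Fin m) Subtype.val
        + Matrix.single (⟨p, hup.symm, hvp.symm⟩ : {k : Fin m // k ≠ u ∧ k ≠ v})
            (⟨r, hur.symm, hvr.symm⟩ : {k : Fin m // k ≠ u ∧ k ≠ v}) 1
        + Matrix.single (⟨r, hur.symm, hvr.symm⟩ : {k : Fin m // k ≠ u ∧ k ≠ v})
            (⟨p, hup.symm, hvp.symm⟩ : {k : Fin m // k ≠ u ∧ k ≠ v}) 1).rank + 2 := by
  classical
  have hsym : ∀ i j, A j i = A i j := hA.apply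
  set S := {k : Fin m // k ≠ u ∧ k ≠ v} with hS
  let e : (Fin 2 ⊕ S) ≃ Fin m :=
    { toFun := Sum.elim ![u, v] (Subtype.val : S → Fin m)
      invFun := fun x =>
        if h1 : x = u then Sum.inl 0 else if h2 : x = v then Sum.inl 1 else Sum.inr ⟨x, h1, h2⟩
      left_inv := by
        rintro (i | k)
        · fin_cases i <;> simp [huv.symm, huv, Ne.symm huv]
        · simp [k.2.1, k.2.2]
      right_inv := by
        intro x
        by_cases h1 : x = u
        · simp [h1]
        · by_cases h2 : x = v <;> simp [h1, h2, Ne.symm huv] }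
  have he0 : e (Sum.inl 0) = u := rfl
  have he1 : e (Sum.inl 1) = v := rfl
  have heS : ∀ k : S, e (Sum.inr k) = (k : Fin m) := fun k => rfl
  let M : Matrix (Fin 2) (Fin 2) (ZMod 2) := !![0, 1; 1, 0]
  let Bm : Matrix (Fin 2) S (ZMod 2) := Matrix.of fun i k =>
    if i = 0 then (if (k : Fin m) = p then 1 else 0) else (if (k : Fin m) = r then 1 else 0)
  let Cm : Matrix S (Fin 2) (ZMod 2) := Matrix.of (fun k i => Bm i k)
  let Dm : Matrix S S (ZMod 2) := A.submatrix Subtype.val Subtype.val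
  have hMM : M * M = 1 := by decide
  haveI : Invertible M := invertibleOfRightInverse M M hMM
  have hInv : (⅟M : Matrix (Fin 2) (Fin 2) (ZMod 2)) = M := invOf_eq_right_inv hMM
  have hrowu : ∀ k : S, A u (k : Fin m) = if (k : Fin m) = p then 1 else 0 := by
    intro k
    by_cases hk : (k : Fin m) = p
    · rw [if_pos hk, hk, hAup]
    · rw [if_neg hk, huval _ k.2.1 k.2.2 hk]
  have hrowv : ∀ k : S, A v (k : Fin m) = if (k : Fin m) = r then 1 else 0 := by
    intro k
    by_cases hk : (k : Fin m) = r
    · rw [if_pos hk, hk, hAvr]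
    · rw [if_neg hk, hvval _ k.2.1 k.2.2 hk]
  have h1 : A.submatrix e e = Matrix.fromBlocks M Bm Cm Dm := by
    ext i j
    cases i with
    | inl i =>
      cases j with
      | inl j =>
        fin_cases i <;> fin_cases j <;>
          simp [M, Matrix.submatrix_apply, he0, he1, huu, hvv, hAuv, hsym u v]
      | inr k =>
        fin_cases i <;>
          simp [Bm, Matrix.submatrix_apply, he0, he1, heS, hrowu, hrowv]
    | inr k =>
      cases j with
      | inl j =>
        fin_cases j <;>
          simp [Cm, Bm, Matrix.submatrix_apply, he0, he1, heS, hsym, hrowu k, hrowv k]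
      | inr l =>
        simp [Dm, Matrix.submatrix_apply, heS]
  set T := (A.submatrix (Subtype.val : S → Fin m) Subtype.val
        + Matrix.single (⟨p, hup.symm, hvp.symm⟩ : S)
            (⟨r, hur.symm, hvr.symm⟩ : S) 1
        + Matrix.single (⟨r, hur.symm, hvr.symm⟩ : S)
            (⟨p, hup.symm, hvp.symm⟩ : S) 1) with hT
  have hSchur : Dm - Cm * ⅟M * Bm = T := by
    rw [hInv]
    ext k l
    have hL : (Cm * M * Bm) k l =
        (if (k : Fin m) = p then 1 else 0) * (if (l : Fin m) = r then 1 else 0)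
          + (if (k : Fin m) = r then 1 else 0) * (if (l : Fin m) = p then 1 else 0) := by
      simp [Matrix.mul_apply, Fin.sum_univ_two, Cm, Bm, M]
      ring
    have hs1 : (Matrix.single (⟨p, hup.symm, hvp.symm⟩ : S)
        (⟨r, hur.symm, hvr.symm⟩ : S) (1 : ZMod 2)) k l =
        (if (k : Fin m) = p then 1 else 0) * (if (l : Fin m) = r then 1 else 0) := by
      simp only [Matrix.single, Matrix.of_apply, Subtype.ext_iff]
      by_cases h1 : (k : Fin m) = p <;> by_cases h2 : (l : Fin m) = r <;>
        simp [h1, h2, @eq_comm _ p, @eq_comm _ r]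
    have hs2 : (Matrix.single (⟨r, hur.symm, hvr.symm⟩ : S)
        (⟨p, hup.symm, hvp.symm⟩ : S) (1 : ZMod 2)) k l =
        (if (k : Fin m) = r then 1 else 0) * (if (l : Fin m) = p then 1 else 0) := by
      simp only [Matrix.single, Matrix.of_apply, Subtype.ext_iff]
      by_cases h1 : (k : Fin m) = r <;> by_cases h2 : (l : Fin m) = p <;>
        simp [h1, h2, @eq_comm _ p, @eq_comm _ r]
    rw [Matrix.sub_apply, hL, hT, Matrix.add_apply, Matrix.add_apply, hs1, hs2,
      CharTwo.sub_eq_add]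
    ring
  constructor
  · rw [← Matrix.det_submatrix_equiv_self e A, h1, Matrix.det_fromBlocks₁₁, hSchur]
    rw [show M.det = 1 from by decide, one_mul]
  · rw [← Matrix.rank_submatrix A e e, h1, my_rank_fromBlocks₁₁, hSchur,
      Fintype.card_fin, add_comm]
end

section
/- Modification M1 preserves the intersection data: let A be an m×m symmetric matrix over ZMod 2 and let q ≠ v be two indices such that the row of A indexed by q equals the standard basis vector e_v (i.e., A q v = 1 and A q k = 0 for every k ≠ v; in particular A q q = 0, so q is an even vertex of valency 1 — a vertex of type Q — attached to v), and suppose A v v = 1 (v is odd). Let B = A + E_{vv} be the matrix obtained by flipping the parity of v. Then det B = det A and rank B = rank A. -/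
/-- Modification M1: if a vertex `q` of type Q (even, valency 1) is attached to an odd
vertex `v`, then flipping the parity of `v` changes neither the determinant nor the
rank of the mod-2 intersection matrix. -/
theorem modification_M1 {m : ℕ} (A : Matrix (Fin m) (Fin m) (ZMod 2))
    (hA : A.IsSymm) (q v : Fin m) (hqv : q ≠ v)
    (hrow : ∀ k, A q k = (Pi.single v 1 : Fin m → ZMod 2) k)
    (hvv : A v v = 1) :
    (A + Matrix.single v v 1).det = A.det ∧
      (A + Matrix.single v v 1).rank = A.rank := by
  have hmul : Matrix.single v q 1 * A = Matrix.single v v 1 := by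
    ext i j
    rw [Matrix.mul_apply]
    by_cases hi : i = v
    · subst hi
      rw [Finset.sum_eq_single q]
      · simp [Matrix.single, hrow j, Pi.single_apply, eq_comm]
      · intro b _ hb; simp [Matrix.single, hb.symm]
      · simp
    · rw [Finset.sum_eq_zero]
      · simp [Matrix.single, Ne.symm hi]
      · intro b _; simp [Matrix.single, Ne.symm hi]
  have key : A + Matrix.single v v 1 = Matrix.transvection v q 1 * A := by
    rw [Matrix.transvection, add_mul, one_mul, hmul]
  have hdet : (Matrix.transvection v q (1 : ZMod 2)).det = 1 :=
    Matrix.det_transvection_of_ne v q (Ne.symm hqv) 1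
  constructor
  · rw [key, Matrix.det_mul, hdet, one_mul]
  · rw [key, Matrix.rank_mul_eq_right_of_isUnit_det]
    rw [hdet]; exact isUnit_one
end
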